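/- Under the standing assumption, for every p ∈ S_𝓖 the marginal compatibility class M(p) contains exactly one equilibrium of the recombination dynamics, namely the point q with q(g) = ∏_{i ∈ 𝓛} pᵢ(gᵢ) for all g ∈ 𝓖. -/

import Mathlib

open Finset

/-- Recombination of gametes `g` and `h` following pattern `{I, Iᶜ}`:
`(g_I h_J)ᵢ = gᵢ` for `i ∈ I` and `= hᵢ` for `i ∈ J = Iᶜ`. -/
def recomb {L : Type} [DecidableEq L] {A : L → Type} (I : Finset L)
    (g h : ∀ i, A i) : ∀ i, A i :=
  fun i => if i ∈ I then g i else h i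

/-- The recombination vector field
`F(p) = (1/2) Σ_{g,h} Σ_{{I,J} ∈ 𝓟} c({I,J}) p(g) p(h) (g_I h_J + g_J h_I − g − h)`,
where the sum over unordered patterns `{I,J}` is written as `(1/2) Σ_{I : Finset L}`
(every unordered pattern `{I, Iᶜ}` corresponds to exactly two subsets `I` and `Iᶜ`;
the rate constants satisfy `c I = c Iᶜ`). -/
noncomputable def recF {L : Type} [Fintype L] [DecidableEq L] {A : L → Type}
    [∀ i, Fintype (A i)] [∀ i, DecidableEq (A i)]
    (c : Finset L → ℝ) (p : (∀ i, A i) → ℝ) : (∀ i, A i) → ℝ :=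
  fun x => (1 / 4) * ∑ g : ∀ i, A i, ∑ h : ∀ i, A i, ∑ I : Finset L,
    c I * p g * p h *
      ((if x = recomb I g h then 1 else 0) + (if x = recomb Iᶜ g h then 1 else 0)
        - (if x = g then 1 else 0) - (if x = h then 1 else 0))

/-- The marginal frequency `pᵢ(a) = Σ_{g : gᵢ = a} p(g)`. -/
noncomputable def marg {L : Type} [Fintype L] [DecidableEq L] {A : L → Type}
    [∀ i, Fintype (A i)] [∀ i, DecidableEq (A i)]
    (p : (∀ i, A i) → ℝ) (i : L) (a : A i) : ℝ :=
  ∑ g : ∀ j, A j, if g i = a then p g else 0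

set_option linter.unusedSectionVars false
namespace RecombAux

variable {L : Type} [Fintype L] [DecidableEq L] {A : L → Type}
  [∀ i, Fintype (A i)] [∀ i, DecidableEq (A i)]

noncomputable def mI (I : Finset L) (r : (∀ i, A i) → ℝ) (x : ∀ i, A i) : ℝ :=
  ∑ g : ∀ i, A i, if ∀ i ∈ I, g i = x i then r g else 0

lemma recomb_eq_iff (I : Finset L) (g h x : ∀ i, A i) :
    x = recomb I g h ↔ ((∀ i ∈ I, g i = x i) ∧ (∀ i ∈ Iᶜ, h i = x i)) := by
  simp only [funext_iff, recomb, Finset.mem_compl]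
  constructor
  · intro hx
    refine ⟨fun i hi => ?_, fun i hi => ?_⟩
    · rw [hx i, if_pos hi]
    · rw [hx i, if_neg hi]
  · rintro ⟨h1, h2⟩ i
    by_cases hi : i ∈ I
    · rw [if_pos hi, h1 i hi]
    · rw [if_neg hi, h2 i hi]

lemma sum_collapse (I : Finset L) (g h : ∀ i, A i) (f : (∀ i, A i) → ℝ) :
    ∑ x : ∀ i, A i, (if ((∀ i ∈ I, g i = x i) ∧ (∀ i ∈ Iᶜ, h i = x i)) then f x else 0)
      = f (recomb I g h) := by
  simp only [← recomb_eq_iff]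
  simp [Finset.sum_ite_eq]

lemma sum_sum_recomb (I : Finset L) (r : (∀ i, A i) → ℝ) (x : ∀ i, A i) :
    ∑ g : ∀ i, A i, ∑ h : ∀ i, A i, r g * r h * (if x = recomb I g h then (1:ℝ) else 0)
      = mI I r x * mI Iᶜ r x := by
  rw [mI, mI, Finset.sum_mul_sum]
  refine Finset.sum_congr rfl fun g _ => Finset.sum_congr rfl fun h _ => ?_
  simp only [recomb_eq_iff, Finset.mem_compl]
  by_cases h1 : ∀ i ∈ I, g i = x i <;> by_cases h2 : ∀ i ∉ I, h i = x i
  · rw [if_pos ⟨h1, h2⟩, if_pos h2, if_pos h1]; ring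
  · rw [if_neg (fun hc => h2 hc.2), if_neg h2]; ring
  · rw [if_neg (fun hc => h1 hc.1), if_pos h2, if_neg h1]; ring
  · rw [if_neg (fun hc => h2 hc.2), if_neg h2]; ring

lemma sum_sum_left (r : (∀ i, A i) → ℝ) (x : ∀ i, A i) :
    ∑ g : ∀ i, A i, ∑ h : ∀ i, A i, r g * r h * (if x = g then (1:ℝ) else 0)
      = r x * ∑ g : ∀ i, A i, r g := by
  have key : ∀ g : ∀ i, A i, (∑ h : ∀ i, A i, r g * r h * (if x = g then (1:ℝ) else 0))
      = (if x = g then r g else 0) * ∑ h : ∀ i, A i, r h := by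
    intro g
    rw [Finset.mul_sum]
    refine Finset.sum_congr rfl fun h _ => ?_
    by_cases hx : x = g <;> simp [hx]
  simp only [key]
  rw [← Finset.sum_mul]
  congr 1
  simp [Finset.sum_ite_eq]

lemma sum_sum_right (r : (∀ i, A i) → ℝ) (x : ∀ i, A i) :
    ∑ g : ∀ i, A i, ∑ h : ∀ i, A i, r g * r h * (if x = h then (1:ℝ) else 0)
      = r x * ∑ g : ∀ i, A i, r g := by
  have key : ∀ g : ∀ i, A i, (∑ h : ∀ i, A i, r g * r h * (if x = h then (1:ℝ) else 0))
      = r g * r x := by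
    intro g
    simp only [mul_assoc, ← Finset.mul_sum]
    congr 1
    simp [mul_ite, Finset.sum_ite_eq]
  simp only [key]
  rw [← Finset.sum_mul]
  ring

end RecombAux

namespace RecombAux

variable {L : Type} [Fintype L] [DecidableEq L] {A : L → Type}
  [∀ i, Fintype (A i)] [∀ i, DecidableEq (A i)]

lemma sum_swap3 {α β γ : Type*} [Fintype α] [Fintype β] [Fintype γ] (f : α → β → γ → ℝ) :
    ∑ a : α, ∑ b : β, ∑ c : γ, f a b c = ∑ c : γ, ∑ a : α, ∑ b : β, f a b c := by
  calc ∑ a : α, ∑ b : β, ∑ c : γ, f a b c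
      = ∑ a : α, ∑ c : γ, ∑ b : β, f a b c :=
        Finset.sum_congr rfl fun a _ => Finset.sum_comm
    _ = ∑ c : γ, ∑ a : α, ∑ b : β, f a b c := Finset.sum_comm

lemma recF_eq (c : Finset L → ℝ) (r : (∀ i, A i) → ℝ) (x : ∀ i, A i) :
    recF c r x = (1/2) * ∑ I : Finset L,
      c I * (mI I r x * mI Iᶜ r x - r x * ∑ g : ∀ i, A i, r g) := by
  rw [recF, sum_swap3]
  rw [Finset.mul_sum, Finset.mul_sum]
  refine Finset.sum_congr rfl fun I _ => ?_
  have expand : ∀ g h : ∀ i, A i,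
      c I * r g * r h *
        ((if x = recomb I g h then (1:ℝ) else 0) + (if x = recomb Iᶜ g h then 1 else 0)
          - (if x = g then 1 else 0) - (if x = h then 1 else 0))
      = c I * (r g * r h * (if x = recomb I g h then 1 else 0))
        + c I * (r g * r h * (if x = recomb Iᶜ g h then 1 else 0))
        - c I * (r g * r h * (if x = g then 1 else 0))
        - c I * (r g * r h * (if x = h then 1 else 0)) := by
    intro g h; ring
  calc (1/4 : ℝ) * ∑ g : ∀ i, A i, ∑ h : ∀ i, A i, c I * r g * r h *
        ((if x = recomb I g h then (1:ℝ) else 0) + (if x = recomb Iᶜ g h then 1 else 0)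
          - (if x = g then 1 else 0) - (if x = h then 1 else 0))
      = (1/4 : ℝ) *
        (c I * (∑ g : ∀ i, A i, ∑ h : ∀ i, A i, r g * r h * (if x = recomb I g h then 1 else 0))
        + c I * (∑ g : ∀ i, A i, ∑ h : ∀ i, A i, r g * r h * (if x = recomb Iᶜ g h then 1 else 0))
        - c I * (∑ g : ∀ i, A i, ∑ h : ∀ i, A i, r g * r h * (if x = g then 1 else 0))
        - c I * (∑ g : ∀ i, A i, ∑ h : ∀ i, A i, r g * r h * (if x = h then 1 else 0))) := by
        simp only [expand, Finset.sum_add_distrib, Finset.sum_sub_distrib, ← Finset.mul_sum]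
    _ = (1/2 : ℝ) * (c I * (mI I r x * mI Iᶜ r x - r x * ∑ g : ∀ i, A i, r g)) := by
        rw [sum_sum_recomb, sum_sum_recomb, sum_sum_left, sum_sum_right, compl_compl]
        ring

lemma mI_nonneg (I : Finset L) (r : (∀ i, A i) → ℝ) (hr : ∀ g, 0 ≤ r g) (x : ∀ i, A i) :
    0 ≤ mI I r x :=
  Finset.sum_nonneg fun g _ => by split_ifs; exacts [hr g, le_refl 0]

lemma self_le_mI (I : Finset L) (r : (∀ i, A i) → ℝ) (hr : ∀ g, 0 ≤ r g) (x : ∀ i, A i) :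
    r x ≤ mI I r x := by
  have h := Finset.single_le_sum (f := fun g : ∀ i, A i => if ∀ i ∈ I, g i = x i then r g else 0)
    (fun g _ => by split_ifs; exacts [hr g, le_refl 0]) (Finset.mem_univ x)
  simpa [mI] using h

lemma mI_empty (r : (∀ i, A i) → ℝ) (x : ∀ i, A i) : mI ∅ r x = ∑ g : ∀ i, A i, r g := by
  simp [mI]

lemma mI_univ (r : (∀ i, A i) → ℝ) (x : ∀ i, A i) : mI univ r x = r x := by
  have key : ∀ g : ∀ i, A i, (∀ i ∈ (univ : Finset L), g i = x i) ↔ g = x := by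
    intro g; simp [funext_iff]
  simp only [mI, key]
  simp [Finset.sum_ite_eq']

lemma marg_eq_mI (r : (∀ i, A i) → ℝ) (i : L) (x : ∀ i, A i) :
    mI {i} r x = marg r i (x i) := by
  simp [mI, marg]

lemma sum_marg (r : (∀ i, A i) → ℝ) (i : L) :
    ∑ a : A i, marg r i a = ∑ g : ∀ i, A i, r g := by
  simp only [marg]
  rw [Finset.sum_comm]
  refine Finset.sum_congr rfl fun g _ => ?_
  simp [Finset.sum_ite_eq]

lemma mI_prod (m : ∀ i, A i → ℝ) (hm1 : ∀ i, ∑ a : A i, m i a = 1) (I : Finset L)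
    (x : ∀ i, A i) :
    mI I (fun g => ∏ i, m i (g i)) x = ∏ i ∈ I, m i (x i) := by
  have step1 : mI I (fun g => ∏ i, m i (g i)) x
      = ∑ g : ∀ i, A i, ∏ i,
          (if i ∈ I then (if g i = x i then m i (g i) else 0) else m i (g i)) := by
    refine Finset.sum_congr rfl fun g _ => ?_
    by_cases hg : ∀ i ∈ I, g i = x i
    · rw [if_pos hg]
      refine Finset.prod_congr rfl fun i _ => ?_
      by_cases hi : i ∈ I
      · rw [if_pos hi, if_pos (hg i hi)]
      · rw [if_neg hi]
    · rw [if_neg hg]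
      push_neg at hg
      obtain ⟨i0, hi0, hne⟩ := hg
      exact (Finset.prod_eq_zero (Finset.mem_univ i0) (by rw [if_pos hi0, if_neg hne])).symm
  have step2 : ∀ i : L, (∑ a : A i, if i ∈ I then (if a = x i then m i a else 0) else m i a)
      = if i ∈ I then m i (x i) else 1 := by
    intro i
    by_cases hi : i ∈ I
    · simp only [if_pos hi]
      simpa using Finset.sum_ite_eq' univ (x i) (m i)
    · simp only [if_neg hi, hm1 i]
  rw [step1, ← Fintype.prod_sum (fun i a => if i ∈ I then (if a = x i then m i a else 0) else m i a)]
  rw [Finset.prod_congr rfl fun i _ => step2 i, Finset.prod_ite_mem, Finset.univ_inter]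

lemma sum_prod_eq (m : ∀ i, A i → ℝ) :
    ∑ g : ∀ i, A i, ∏ i, m i (g i) = ∏ i, ∑ a : A i, m i a := (Fintype.prod_sum _).symm

lemma sum_uI_mul (I : Finset L) (r : (∀ i, A i) → ℝ) (ψ : (∀ i, A i) → ℝ)
    (hψ : ∀ x y : ∀ i, A i, (∀ i ∈ I, x i = y i) → ψ x = ψ y) :
    ∑ x : ∀ i, A i, (mI I r x * mI Iᶜ r x) * ψ x
      = (∑ g : ∀ i, A i, r g) * ∑ x : ∀ i, A i, r x * ψ x := by
  have key : ∀ x : ∀ i, A i, (mI I r x * mI Iᶜ r x) * ψ x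
      = ∑ g : ∀ i, A i, ∑ k : ∀ i, A i,
          (if ((∀ i ∈ I, g i = x i) ∧ (∀ i ∈ Iᶜ, k i = x i)) then r g * r k * ψ x else 0) := by
    intro x
    rw [mI, mI, Finset.sum_mul_sum, Finset.sum_mul]
    refine Finset.sum_congr rfl fun g _ => ?_
    rw [Finset.sum_mul]
    refine Finset.sum_congr rfl fun k _ => ?_
    by_cases h1 : ∀ i ∈ I, g i = x i <;> by_cases h2 : ∀ i ∈ Iᶜ, k i = x i
    · rw [if_pos h1, if_pos h2, if_pos ⟨h1, h2⟩]
    · rw [if_pos h1, if_neg h2, if_neg (fun hc => h2 hc.2)]; ring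
    · rw [if_neg h1, if_pos h2, if_neg (fun hc => h1 hc.1)]; ring
    · rw [if_neg h1, if_neg h2, if_neg (fun hc => h1 hc.1)]; ring
  calc ∑ x : ∀ i, A i, (mI I r x * mI Iᶜ r x) * ψ x
      = ∑ x : ∀ i, A i, ∑ g : ∀ i, A i, ∑ k : ∀ i, A i,
          (if ((∀ i ∈ I, g i = x i) ∧ (∀ i ∈ Iᶜ, k i = x i)) then r g * r k * ψ x else 0) :=
        Finset.sum_congr rfl fun x _ => key x
    _ = ∑ g : ∀ i, A i, ∑ k : ∀ i, A i, ∑ x : ∀ i, A i,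
          (if ((∀ i ∈ I, g i = x i) ∧ (∀ i ∈ Iᶜ, k i = x i)) then r g * r k * ψ x else 0) := by
        rw [sum_swap3, sum_swap3]
    _ = ∑ g : ∀ i, A i, ∑ k : ∀ i, A i, r g * r k * ψ g := by
        refine Finset.sum_congr rfl fun g _ => Finset.sum_congr rfl fun k _ => ?_
        rw [sum_collapse I g k (fun x => r g * r k * ψ x)]
        have : ψ (recomb I g k) = ψ g := by
          refine hψ _ _ fun i hi => ?_
          simp [recomb, hi]
        rw [this]
    _ = (∑ g : ∀ i, A i, r g) * ∑ x : ∀ i, A i, r x * ψ x := by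
        have fin : ∀ g : ∀ i, A i, (∑ k : ∀ i, A i, r g * r k * ψ g)
            = (r g * ψ g) * ∑ k : ∀ i, A i, r k := by
          intro g
          rw [Finset.mul_sum]
          exact Finset.sum_congr rfl fun k _ => by ring
        simp only [fin]
        rw [← Finset.sum_mul]
        ring

noncomputable def klTerm (t s : ℝ) : ℝ := t * Real.log t - t * Real.log s - t + s

lemma klTerm_nonneg {t s : ℝ} (ht : 0 ≤ t) (hs : 0 ≤ s) (hts : t ≠ 0 → s ≠ 0) :
    0 ≤ klTerm t s := by
  unfold klTerm
  rcases ht.eq_or_lt with h0 | h0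
  · rw [← h0]; simpa using hs
  · have hs0 : 0 < s := hs.lt_of_ne' (hts h0.ne')
    have hlog : Real.log (s/t) ≤ s/t - 1 := Real.log_le_sub_one_of_pos (by positivity)
    rw [Real.log_div hs0.ne' h0.ne'] at hlog
    have h2 : t * (Real.log s - Real.log t) ≤ t * (s/t - 1) :=
      mul_le_mul_of_nonneg_left hlog h0.le
    have h3 : t * (s/t - 1) = s - t := by field_simp
    nlinarith
lemma klTerm_eq_zero {t s : ℝ} (ht : 0 ≤ t) (hs : 0 ≤ s) (hts : t ≠ 0 → s ≠ 0)
    (h : klTerm t s = 0) : t = s := by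
  unfold klTerm at h
  rcases ht.eq_or_lt with h0 | h0
  · rw [← h0] at h ⊢; simpa using h.symm
  · have hs0 : 0 < s := hs.lt_of_ne' (hts h0.ne')
    by_contra hne
    have hne' : s / t ≠ 1 := by
      intro hh
      rw [div_eq_one_iff_eq h0.ne'] at hh
      exact hne hh.symm
    have hlog : Real.log (s/t) < s/t - 1 := Real.log_lt_sub_one_of_pos (by positivity) hne'
    rw [Real.log_div hs0.ne' h0.ne'] at hlog
    have h2 : t * (Real.log s - Real.log t) < t * (s/t - 1) := (mul_lt_mul_iff_right₀ h0).mpr hlog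
    have h3 : t * (s/t - 1) = s - t := by field_simp
    nlinarith

lemma mI_local (I : Finset L) (r : (∀ i, A i) → ℝ) {x y : ∀ i, A i}
    (hxy : ∀ i ∈ I, x i = y i) : mI I r x = mI I r y := by
  refine Finset.sum_congr rfl fun g _ => ?_
  refine if_congr ?_ rfl rfl
  constructor
  · intro h i hi; rw [← hxy i hi]; exact h i hi
  · intro h i hi; rw [hxy i hi]; exact h i hi

lemma kl_identity (I : Finset L) (r : (∀ i, A i) → ℝ) (hr0 : ∀ g, 0 ≤ r g)
    (hr1 : ∑ g : ∀ i, A i, r g = 1) :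
    ∑ x : ∀ i, A i, klTerm (r x) (mI I r x * mI Iᶜ r x)
      = ∑ x : ∀ i, A i, r x * Real.log (r x)
        - ∑ x : ∀ i, A i, (mI I r x * mI Iᶜ r x) * Real.log (mI I r x * mI Iᶜ r x) := by
  have hmIpos : ∀ (J : Finset L) (x : ∀ i, A i), r x ≠ 0 → 0 < mI J r x := by
    intro J x hx
    exact lt_of_lt_of_le ((hr0 x).lt_of_ne' hx) (self_le_mI J r hr0 x)
  have hlocI : ∀ x y : ∀ i, A i, (∀ i ∈ I, x i = y i) →
      Real.log (mI I r x) = Real.log (mI I r y) :=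
    fun x y hxy => by rw [mI_local I r hxy]
  have hlocIc : ∀ x y : ∀ i, A i, (∀ i ∈ Iᶜ, x i = y i) →
      Real.log (mI Iᶜ r x) = Real.log (mI Iᶜ r y) :=
    fun x y hxy => by rw [mI_local Iᶜ r hxy]
  have hu1 : ∑ x : ∀ i, A i, mI I r x * mI Iᶜ r x = 1 := by
    have h := sum_uI_mul I r (fun _ => 1) (fun _ _ _ => rfl)
    simpa [hr1] using h
  have hd : ∑ x : ∀ i, A i, (mI I r x * mI Iᶜ r x) * Real.log (mI I r x)
      = ∑ x : ∀ i, A i, r x * Real.log (mI I r x) := by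
    have h := sum_uI_mul I r (fun x => Real.log (mI I r x)) hlocI
    simpa [hr1] using h
  have he : ∑ x : ∀ i, A i, (mI I r x * mI Iᶜ r x) * Real.log (mI Iᶜ r x)
      = ∑ x : ∀ i, A i, r x * Real.log (mI Iᶜ r x) := by
    have h := sum_uI_mul Iᶜ r (fun x => Real.log (mI Iᶜ r x)) hlocIc
    rw [compl_compl, hr1, one_mul] at h
    rw [← h]
    exact Finset.sum_congr rfl fun x _ => by ring
  have hsplit_u : ∀ x : ∀ i, A i, (mI I r x * mI Iᶜ r x) * Real.log (mI I r x * mI Iᶜ r x)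
      = (mI I r x * mI Iᶜ r x) * Real.log (mI I r x)
        + (mI I r x * mI Iᶜ r x) * Real.log (mI Iᶜ r x) := by
    intro x
    by_cases hu : mI I r x * mI Iᶜ r x = 0
    · rw [hu, zero_mul, zero_mul, zero_mul, add_zero]
    · rw [Real.log_mul (left_ne_zero_of_mul hu) (right_ne_zero_of_mul hu)]; ring
  have hsplit_r : ∀ x : ∀ i, A i, r x * Real.log (mI I r x * mI Iᶜ r x)
      = r x * Real.log (mI I r x) + r x * Real.log (mI Iᶜ r x) := by
    intro x
    by_cases hx : r x = 0
    · rw [hx]; ring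
    · rw [Real.log_mul (hmIpos I x hx).ne' (hmIpos Iᶜ x hx).ne']; ring
  calc ∑ x : ∀ i, A i, klTerm (r x) (mI I r x * mI Iᶜ r x)
      = ∑ x : ∀ i, A i, (r x * Real.log (r x) - r x * Real.log (mI I r x)
          - r x * Real.log (mI Iᶜ r x) - r x + mI I r x * mI Iᶜ r x) :=
        Finset.sum_congr rfl fun x _ => by unfold klTerm; rw [hsplit_r x]; ring
    _ = ∑ x : ∀ i, A i, r x * Real.log (r x) - ∑ x : ∀ i, A i, r x * Real.log (mI I r x)
        - ∑ x : ∀ i, A i, r x * Real.log (mI Iᶜ r x) - ∑ x : ∀ i, A i, r x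
        + ∑ x : ∀ i, A i, mI I r x * mI Iᶜ r x := by
        rw [Finset.sum_add_distrib, Finset.sum_sub_distrib, Finset.sum_sub_distrib,
          Finset.sum_sub_distrib]
    _ = ∑ x : ∀ i, A i, r x * Real.log (r x)
        - ∑ x : ∀ i, A i, (mI I r x * mI Iᶜ r x) * Real.log (mI I r x * mI Iᶜ r x) := by
        have hlog : ∑ x : ∀ i, A i, (mI I r x * mI Iᶜ r x) * Real.log (mI I r x * mI Iᶜ r x)
            = ∑ x : ∀ i, A i, r x * Real.log (mI I r x)
              + ∑ x : ∀ i, A i, r x * Real.log (mI Iᶜ r x) := by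
          rw [Finset.sum_congr rfl fun x _ => hsplit_u x, Finset.sum_add_distrib, hd, he]
        rw [hlog, hr1, hu1]; ring

lemma mI_split (I K : Finset L) (r : (∀ i, A i) → ℝ)
    (hfac : ∀ x, r x = mI I r x * mI Iᶜ r x) (x : ∀ i, A i) :
    mI K r x = mI (K ∩ I) r x * mI (K \ I) r x := by
  have step1 : ∀ g : ∀ i, A i, (if ∀ i ∈ K, g i = x i then r g else 0)
      = ∑ g' : ∀ i, A i, ∑ h' : ∀ i, A i,
          (if ((∀ i ∈ K, g i = x i) ∧ (∀ i ∈ I, g' i = g i) ∧ (∀ i ∈ Iᶜ, h' i = g i))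
           then r g' * r h' else 0) := by
    intro g
    by_cases hg : ∀ i ∈ K, g i = x i
    · rw [if_pos hg, hfac g, mI, mI, Finset.sum_mul_sum]
      refine Finset.sum_congr rfl fun g' _ => Finset.sum_congr rfl fun h' _ => ?_
      by_cases h1 : ∀ i ∈ I, g' i = g i <;> by_cases h2 : ∀ i ∈ Iᶜ, h' i = g i
      · rw [if_pos h1, if_pos h2, if_pos ⟨hg, h1, h2⟩]
      · rw [if_pos h1, if_neg h2, if_neg (fun hc => h2 hc.2.2)]; ring
      · rw [if_neg h1, if_pos h2, if_neg (fun hc => h1 hc.2.1)]; ring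
      · rw [if_neg h1, if_neg h2, if_neg (fun hc => h1 hc.2.1)]; ring
    · rw [if_neg hg]
      symm
      refine Finset.sum_eq_zero fun g' _ => Finset.sum_eq_zero fun h' _ => ?_
      exact if_neg (fun hc => hg hc.1)
  have step2 : ∀ g' h' : ∀ i, A i, (∑ g : ∀ i, A i,
      if ((∀ i ∈ K, g i = x i) ∧ (∀ i ∈ I, g' i = g i) ∧ (∀ i ∈ Iᶜ, h' i = g i))
      then r g' * r h' else 0)
      = (if ((∀ i ∈ K ∩ I, g' i = x i) ∧ (∀ i ∈ K \ I, h' i = x i))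
         then r g' * r h' else 0) := by
    intro g' h'
    have hiff : ∀ g : ∀ i, A i,
        ((∀ i ∈ K, g i = x i) ∧ (∀ i ∈ I, g' i = g i) ∧ (∀ i ∈ Iᶜ, h' i = g i))
        ↔ (g = recomb I g' h'
            ∧ ((∀ i ∈ K ∩ I, g' i = x i) ∧ (∀ i ∈ K \ I, h' i = x i))) := by
      intro g
      constructor
      · rintro ⟨hK, hI, hIc⟩
        have hg : g = recomb I g' h' := by
          funext i
          by_cases hi : i ∈ I
          · rw [recomb]; rw [if_pos hi, ← hI i hi]
          · rw [recomb]; rw [if_neg hi, ← hIc i (Finset.mem_compl.mpr hi)]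
        refine ⟨hg, fun i hi => ?_, fun i hi => ?_⟩
        · obtain ⟨hiK, hiI⟩ := Finset.mem_inter.mp hi
          rw [hI i hiI, hK i hiK]
        · obtain ⟨hiK, hiI⟩ := Finset.mem_sdiff.mp hi
          rw [hIc i (Finset.mem_compl.mpr hiI), hK i hiK]
      · rintro ⟨hg, hKI, hKd⟩
        subst hg
        refine ⟨fun i hi => ?_, fun i hi => by simp [recomb, hi], fun i hi => ?_⟩
        · by_cases hiI : i ∈ I
          · simpa [recomb, hiI] using hKI i (Finset.mem_inter.mpr ⟨hi, hiI⟩)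
          · simpa [recomb, hiI] using hKd i (Finset.mem_sdiff.mpr ⟨hi, hiI⟩)
        · simp [recomb, Finset.mem_compl.mp hi]
    rw [Finset.sum_congr rfl fun g _ => if_congr (hiff g) rfl rfl]
    by_cases hP : (∀ i ∈ K ∩ I, g' i = x i) ∧ (∀ i ∈ K \ I, h' i = x i)
    · rw [if_pos hP,
        Finset.sum_congr rfl fun g (_ : g ∈ univ) => if_congr (and_iff_left hP) rfl rfl]
      simp [Finset.sum_ite_eq']
    · rw [if_neg hP]
      exact Finset.sum_eq_zero fun g _ => if_neg (fun hc => hP hc.2)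
  calc mI K r x
      = ∑ g : ∀ i, A i, ∑ g' : ∀ i, A i, ∑ h' : ∀ i, A i,
          (if ((∀ i ∈ K, g i = x i) ∧ (∀ i ∈ I, g' i = g i) ∧ (∀ i ∈ Iᶜ, h' i = g i))
           then r g' * r h' else 0) := Finset.sum_congr rfl fun g _ => step1 g
    _ = ∑ g' : ∀ i, A i, ∑ h' : ∀ i, A i, ∑ g : ∀ i, A i,
          (if ((∀ i ∈ K, g i = x i) ∧ (∀ i ∈ I, g' i = g i) ∧ (∀ i ∈ Iᶜ, h' i = g i))
           then r g' * r h' else 0) := by rw [sum_swap3, sum_swap3]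
    _ = ∑ g' : ∀ i, A i, ∑ h' : ∀ i, A i,
          (if ((∀ i ∈ K ∩ I, g' i = x i) ∧ (∀ i ∈ K \ I, h' i = x i))
           then r g' * r h' else 0) :=
        Finset.sum_congr rfl fun g' _ => Finset.sum_congr rfl fun h' _ => step2 g' h'
    _ = mI (K ∩ I) r x * mI (K \ I) r x := by
        rw [mI, mI, Finset.sum_mul_sum]
        refine Finset.sum_congr rfl fun g' _ => Finset.sum_congr rfl fun h' _ => ?_
        by_cases h1 : ∀ i ∈ K ∩ I, g' i = x i <;> by_cases h2 : ∀ i ∈ K \ I, h' i = x i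
        · rw [if_pos ⟨h1, h2⟩, if_pos h1, if_pos h2]
        · rw [if_neg (fun hc => h2 hc.2), if_pos h1, if_neg h2]; ring
        · rw [if_neg (fun hc => h1 hc.1), if_neg h1]; ring
        · rw [if_neg (fun hc => h1 hc.1), if_neg h1]; ring



end RecombAux

/-- **Unique equilibrium in every marginal compatibility class (Proposition 1).**
Under the standing assumption, for every `p` in the simplex `S_𝓖`, the marginal
compatibility class `M(p) = {p' ≥ 0 : p'ᵢ(a) = pᵢ(a) for all i, a}` contains exactly one
equilibrium of the recombination dynamics, namely `q(g) = ∏ᵢ pᵢ(gᵢ)`. -/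
theorem unique_equilibrium_in_marginal_class
    {L : Type} [Fintype L] [DecidableEq L] [Nonempty L]
    (A : L → Type) [∀ i, Fintype (A i)] [∀ i, DecidableEq (A i)]
    (hA : ∀ i, 2 ≤ Fintype.card (A i))
    (c : Finset L → ℝ) (hc : ∀ I, 0 ≤ c I) (hcsym : ∀ I, c I = c Iᶜ)
    (hsep : ∀ i j : L, i ≠ j →
      0 < ∑ I ∈ univ.filter (fun I : Finset L => i ∈ I ∧ j ∉ I), c I)
    (p : (∀ i, A i) → ℝ) (hp0 : ∀ g, 0 ≤ p g) (hp1 : ∑ g : ∀ i, A i, p g = 1)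
    (q : (∀ i, A i) → ℝ) (hq : q = fun g => ∏ i : L, marg p i (g i)) :
    ((∀ g, 0 ≤ q g) ∧ (∀ (i : L) (a : A i), marg q i a = marg p i a) ∧ recF c q = 0) ∧
    (∀ r : (∀ i, A i) → ℝ, (∀ g, 0 ≤ r g) →
      (∀ (i : L) (a : A i), marg r i a = marg p i a) → recF c r = 0 → r = q) := by
  subst hq
  set q : (∀ i, A i) → ℝ := fun g => ∏ i : L, marg p i (g i) with hq
  -- basic marginal facts
  have hm0 : ∀ (i : L) (a : A i), 0 ≤ marg p i a := by
    intro i a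
    refine Finset.sum_nonneg fun g _ => ?_
    split_ifs; exacts [hp0 g, le_refl 0]
  have hm1 : ∀ i : L, ∑ a : A i, marg p i a = 1 := fun i => by
    rw [RecombAux.sum_marg]; exact hp1
  have hq0 : ∀ g, 0 ≤ q g := fun g => Finset.prod_nonneg fun i _ => hm0 i (g i)
  have hqS : ∑ g : ∀ i, A i, q g = 1 := by
    rw [hq, RecombAux.sum_prod_eq]
    exact Finset.prod_eq_one fun i _ => hm1 i
  have hqmI : ∀ (J : Finset L) (x : ∀ i, A i),
      RecombAux.mI J q x = ∏ i ∈ J, marg p i (x i) := fun J x =>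
    RecombAux.mI_prod (fun i a => marg p i a) hm1 J x
  have hqx : ∀ x : ∀ i, A i, q x = ∏ i : L, marg p i (x i) := fun _ => rfl
  -- nonemptiness of allele sets
  have hAne : ∀ j : L, Nonempty (A j) := fun j =>
    Fintype.card_pos_iff.mp (by have := hA j; omega)
  -- marginals of q
  have hmq : ∀ (i : L) (a : A i), marg q i a = marg p i a := by
    intro i a
    have x0 : ∀ j, A j := fun j => (hAne j).some
    set x : ∀ j, A j := Function.update x0 i a with hxdef
    have hxi : x i = a := Function.update_self i a x0
    calc marg q i a = marg q i (x i) := by rw [hxi]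
      _ = RecombAux.mI {i} q x := (RecombAux.marg_eq_mI q i x).symm
      _ = ∏ j ∈ ({i} : Finset L), marg p j (x j) := hqmI {i} x
      _ = marg p i (x i) := Finset.prod_singleton _ _
      _ = marg p i a := by rw [hxi]
  -- q is an equilibrium
  have hqF : recF c q = 0 := by
    funext x
    rw [RecombAux.recF_eq]
    have hterm : ∀ I : Finset L,
        c I * (RecombAux.mI I q x * RecombAux.mI Iᶜ q x - q x * ∑ g : ∀ i, A i, q g) = 0 := by
      intro I
      rw [hqS, hqmI I x, hqmI Iᶜ x, Finset.prod_mul_prod_compl, mul_one, hqx x, sub_self,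
        mul_zero]
    rw [Finset.sum_eq_zero fun I _ => hterm I, mul_zero]
    rfl
  refine ⟨⟨hq0, hmq, hqF⟩, ?_⟩
  -- uniqueness
  intro r hr0 hrm hreq
  have i0 : L := Classical.arbitrary L
  have hrS : ∑ g : ∀ i, A i, r g = 1 := by
    rw [← RecombAux.sum_marg r i0]
    rw [Finset.sum_congr rfl fun a _ => hrm i0 a, RecombAux.sum_marg p i0, hp1]
  -- pointwise equilibrium identity
  have heq : ∀ x : ∀ i, A i,
      ∑ I : Finset L, c I * (RecombAux.mI I r x * RecombAux.mI Iᶜ r x)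
        = (∑ I : Finset L, c I) * r x := by
    intro x
    have h0 := congrFun hreq x
    rw [RecombAux.recF_eq, hrS, Pi.zero_apply] at h0
    have h1 : ∑ I : Finset L,
        (c I * (RecombAux.mI I r x * RecombAux.mI Iᶜ r x) - c I * r x) = 0 := by
      have h2 : ∑ I : Finset L,
          c I * (RecombAux.mI I r x * RecombAux.mI Iᶜ r x - r x * 1) = 0 := by linarith
      rw [← h2]
      exact Finset.sum_congr rfl fun I _ => by ring
    rw [Finset.sum_sub_distrib, ← Finset.sum_mul] at h1
    linarith
  -- single-locus representation lemma
  have hmarg_single : (∀ i j : L, i = j) →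
      ∀ (s : (∀ i, A i) → ℝ) (g : ∀ i, A i), marg s i0 (g i0) = s g := by
    intro hsub s g
    rw [marg]
    have hiff : ∀ h : ∀ i, A i, (h i0 = g i0) ↔ h = g := by
      intro h
      constructor
      · intro hh
        funext j
        have hji : j = i0 := hsub j i0
        subst hji
        exact hh
      · intro hh; rw [hh]
    rw [Finset.sum_congr rfl fun h (_ : h ∈ univ) => if_congr (hiff h) rfl rfl]
    simp [Finset.sum_ite_eq']
  by_cases hC : (∑ I : Finset L, c I) = 0
  · -- degenerate case: all rates zero, so L must be a singleton
    have hcall : ∀ I : Finset L, c I = 0 := by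
      intro I
      have := (Finset.sum_eq_zero_iff_of_nonneg (fun I _ => hc I)).mp hC
      exact this I (Finset.mem_univ I)
    have hsub : ∀ i j : L, i = j := by
      intro i j
      by_contra hne
      have h := hsep i j hne
      rw [Finset.sum_eq_zero fun I _ => hcall I] at h
      exact lt_irrefl 0 h
    funext g
    calc r g = marg r i0 (g i0) := (hmarg_single hsub r g).symm
      _ = marg p i0 (g i0) := hrm i0 (g i0)
      _ = marg q i0 (g i0) := (hmq i0 (g i0)).symm
      _ = q g := hmarg_single hsub q g
  · -- main case
    have hCpos : 0 < ∑ I : Finset L, c I :=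
      (Finset.sum_nonneg fun I _ => hc I).lt_of_ne' hC
    set C : ℝ := ∑ I : Finset L, c I with hCdef
    have hw1 : ∑ I : Finset L, c I / C = 1 := by
      rw [← Finset.sum_div]
      exact div_self hCpos.ne'
    have hu0 : ∀ (I : Finset L) (x : ∀ i, A i),
        0 ≤ RecombAux.mI I r x * RecombAux.mI Iᶜ r x := fun I x =>
      mul_nonneg (RecombAux.mI_nonneg I r hr0 x) (RecombAux.mI_nonneg Iᶜ r hr0 x)
    have hupos : ∀ (I : Finset L) (x : ∀ i, A i), r x ≠ 0 →
        RecombAux.mI I r x * RecombAux.mI Iᶜ r x ≠ 0 := by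
      intro I x hx
      have h1 : 0 < r x := (hr0 x).lt_of_ne' hx
      have h2 : 0 < RecombAux.mI I r x := lt_of_lt_of_le h1 (RecombAux.self_le_mI I r hr0 x)
      have h3 : 0 < RecombAux.mI Iᶜ r x := lt_of_lt_of_le h1 (RecombAux.self_le_mI Iᶜ r hr0 x)
      exact (mul_pos h2 h3).ne'
    have hrx : ∀ x : ∀ i, A i,
        r x = ∑ I : Finset L, (c I / C) * (RecombAux.mI I r x * RecombAux.mI Iᶜ r x) := by
      intro x
      have h : ∑ I : Finset L, (c I / C) * (RecombAux.mI I r x * RecombAux.mI Iᶜ r x)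
          = (∑ I : Finset L, c I * (RecombAux.mI I r x * RecombAux.mI Iᶜ r x)) / C := by
        rw [Finset.sum_div]
        exact Finset.sum_congr rfl fun I _ => div_mul_eq_mul_div _ _ _
      rw [h, heq x, mul_comm, mul_div_assoc, div_self hCpos.ne', mul_one]
    -- Jensen's inequality
    have hjen : ∀ x : ∀ i, A i, r x * Real.log (r x)
        ≤ ∑ I : Finset L, (c I / C) * ((RecombAux.mI I r x * RecombAux.mI Iᶜ r x)
            * Real.log (RecombAux.mI I r x * RecombAux.mI Iᶜ r x)) := by
      intro x
      have happ := Real.convexOn_mul_log.map_sum_le (t := (univ : Finset (Finset L)))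
        (w := fun I : Finset L => c I / C)
        (p := fun I : Finset L => RecombAux.mI I r x * RecombAux.mI Iᶜ r x)
        (fun I _ => div_nonneg (hc I) hCpos.le) hw1
        (fun I _ => Set.mem_Ici.mpr (hu0 I x))
      simp only [smul_eq_mul] at happ
      rw [← hrx x] at happ
      exact happ
    -- KL divergences
    have hD_nonneg : ∀ I : Finset L, (0:ℝ) ≤ ∑ x : ∀ i, A i,
        RecombAux.klTerm (r x) (RecombAux.mI I r x * RecombAux.mI Iᶜ r x) := by
      intro I
      refine Finset.sum_nonneg fun x _ => ?_
      exact RecombAux.klTerm_nonneg (hr0 x) (hu0 I x) (hupos I x)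
    have hD_eq : ∀ I : Finset L,
        (∑ x : ∀ i, A i, RecombAux.klTerm (r x) (RecombAux.mI I r x * RecombAux.mI Iᶜ r x))
        = (∑ x : ∀ i, A i, r x * Real.log (r x))
          - ∑ x : ∀ i, A i, (RecombAux.mI I r x * RecombAux.mI Iᶜ r x)
              * Real.log (RecombAux.mI I r x * RecombAux.mI Iᶜ r x) := fun I =>
      RecombAux.kl_identity I r hr0 hrS
    have hsum_jen : (∑ x : ∀ i, A i, r x * Real.log (r x))
        ≤ ∑ I : Finset L, (c I / C) * ∑ x : ∀ i, A i,
            (RecombAux.mI I r x * RecombAux.mI Iᶜ r x)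
              * Real.log (RecombAux.mI I r x * RecombAux.mI Iᶜ r x) := by
      calc (∑ x : ∀ i, A i, r x * Real.log (r x))
          ≤ ∑ x : ∀ i, A i, ∑ I : Finset L,
              (c I / C) * ((RecombAux.mI I r x * RecombAux.mI Iᶜ r x)
                * Real.log (RecombAux.mI I r x * RecombAux.mI Iᶜ r x)) :=
            Finset.sum_le_sum fun x _ => hjen x
        _ = ∑ I : Finset L, (c I / C) * ∑ x : ∀ i, A i,
              (RecombAux.mI I r x * RecombAux.mI Iᶜ r x)
                * Real.log (RecombAux.mI I r x * RecombAux.mI Iᶜ r x) := by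
            rw [Finset.sum_comm]
            exact Finset.sum_congr rfl fun I _ => (Finset.mul_sum _ _ _).symm
    have hkey : ∑ I : Finset L, (c I / C) * ∑ x : ∀ i, A i,
        RecombAux.klTerm (r x) (RecombAux.mI I r x * RecombAux.mI Iᶜ r x) = 0 := by
      have hle : ∑ I : Finset L, (c I / C) * ∑ x : ∀ i, A i,
          RecombAux.klTerm (r x) (RecombAux.mI I r x * RecombAux.mI Iᶜ r x) ≤ 0 := by
        have hcomp : ∑ I : Finset L, (c I / C) * ∑ x : ∀ i, A i,
            RecombAux.klTerm (r x) (RecombAux.mI I r x * RecombAux.mI Iᶜ r x)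
            = (∑ x : ∀ i, A i, r x * Real.log (r x))
              - ∑ I : Finset L, (c I / C) * ∑ x : ∀ i, A i,
                  (RecombAux.mI I r x * RecombAux.mI Iᶜ r x)
                    * Real.log (RecombAux.mI I r x * RecombAux.mI Iᶜ r x) := by
          rw [Finset.sum_congr rfl fun I (_ : I ∈ univ) => by rw [hD_eq I, mul_sub]]
          rw [Finset.sum_sub_distrib, ← Finset.sum_mul, hw1, one_mul]
        rw [hcomp]
        linarith [hsum_jen]
      have hge : (0:ℝ) ≤ ∑ I : Finset L, (c I / C) * ∑ x : ∀ i, A i,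
          RecombAux.klTerm (r x) (RecombAux.mI I r x * RecombAux.mI Iᶜ r x) :=
        Finset.sum_nonneg fun I _ => mul_nonneg (div_nonneg (hc I) hCpos.le) (hD_nonneg I)
      linarith
    -- factorization for every pattern with positive rate
    have hfacI : ∀ I : Finset L, c I ≠ 0 →
        ∀ x : ∀ i, A i, r x = RecombAux.mI I r x * RecombAux.mI Iᶜ r x := by
      intro I hcI x
      have hall := (Finset.sum_eq_zero_iff_of_nonneg
        (fun I (_ : I ∈ univ) => mul_nonneg (div_nonneg (hc I) hCpos.le) (hD_nonneg I))).mp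
        hkey I (Finset.mem_univ I)
      have hwpos : 0 < c I / C := div_pos ((hc I).lt_of_ne' hcI) hCpos
      have hD0 : ∑ x : ∀ i, A i,
          RecombAux.klTerm (r x) (RecombAux.mI I r x * RecombAux.mI Iᶜ r x) = 0 := by
        rcases mul_eq_zero.mp hall with h | h
        · exact absurd h hwpos.ne'
        · exact h
      have hterm := (Finset.sum_eq_zero_iff_of_nonneg
        (fun x (_ : x ∈ univ) =>
          RecombAux.klTerm_nonneg (hr0 x) (hu0 I x) (hupos I x))).mp hD0 x (Finset.mem_univ x)
      exact RecombAux.klTerm_eq_zero (hr0 x) (hu0 I x) (hupos I x) hterm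
    -- existence of separating patterns with positive rate
    have hsepI : ∀ i j : L, i ≠ j → ∃ I : Finset L, i ∈ I ∧ j ∉ I ∧ c I ≠ 0 := by
      intro i j hij
      by_contra hcon
      push_neg at hcon
      have : ∑ I ∈ univ.filter (fun I : Finset L => i ∈ I ∧ j ∉ I), c I = 0 := by
        refine Finset.sum_eq_zero fun I hI => ?_
        obtain ⟨hiI, hjI⟩ := (Finset.mem_filter.mp hI).2
        exact hcon I hiI hjI
      have h := hsep i j hij
      rw [this] at h
      exact lt_irrefl 0 h
    -- induction on the size of the locus set
    have main : ∀ (n : ℕ) (K : Finset L), K.card ≤ n →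
        ∀ x : ∀ i, A i, RecombAux.mI K r x = ∏ i ∈ K, marg p i (x i) := by
      intro n
      induction n with
      | zero =>
        intro K hK x
        rw [Nat.le_zero, Finset.card_eq_zero] at hK
        subst hK
        rw [RecombAux.mI_empty, hrS, Finset.prod_empty]
      | succ n ih =>
        intro K hK x
        by_cases hcard : K.card ≤ n
        · exact ih K hcard x
        · by_cases h1 : K.card ≤ 1
          · rcases Finset.eq_empty_or_nonempty K with hKe | hKne
            · subst hKe
              rw [RecombAux.mI_empty, hrS, Finset.prod_empty]
            · have hc1 : K.card = 1 := le_antisymm h1 (Finset.card_pos.mpr hKne)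
              obtain ⟨i, hKi⟩ := Finset.card_eq_one.mp hc1
              subst hKi
              rw [RecombAux.marg_eq_mI, hrm i (x i), Finset.prod_singleton]
          · have h2 : 1 < K.card := lt_of_not_ge h1
            obtain ⟨i, hiK, j, hjK, hij⟩ := Finset.one_lt_card.mp h2
            obtain ⟨I, hiI, hjI, hcI⟩ := hsepI i j hij
            have hsplit := RecombAux.mI_split I K r (hfacI I hcI) x
            have hci : (K ∩ I).card ≤ n := by
              have hss : K ∩ I ⊂ K :=
                (Finset.ssubset_iff_of_subset Finset.inter_subset_left).mpr
                  ⟨j, hjK, fun hj => hjI (Finset.mem_inter.mp hj).2⟩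
              have := Finset.card_lt_card hss
              omega
            have hcd : (K \ I).card ≤ n := by
              have hss : K \ I ⊂ K :=
                (Finset.ssubset_iff_of_subset (Finset.sdiff_subset)).mpr
                  ⟨i, hiK, fun hmem => (Finset.mem_sdiff.mp hmem).2 hiI⟩
              have := Finset.card_lt_card hss
              omega
            rw [hsplit, ih _ hci x, ih _ hcd x, mul_comm, ← Finset.prod_union
              (Finset.disjoint_sdiff_inter K I), Finset.sdiff_union_inter]
    funext g
    calc r g = RecombAux.mI univ r g := (RecombAux.mI_univ r g).symm
      _ = ∏ i ∈ univ, marg p i (g i) := main (univ : Finset L).card univ le_rfl g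
      _ = q g := rfl
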